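/- Let m0 > 0 and ε > 0, and let G be a graph on an even number n of vertices with n > 1/ε and e(G) ≤ (4m0 − ε)n². Then there exists a balanced bipartition V(G) = A ∪ A^c with |A| = |A^c| such that max{e(A), e(A^c)} < m0·n². -/

import Mathlib

open scoped Classical

open Finset

/-- The number of edges of `G` with both endpoints in `A`. -/
noncomputable def edgesIn {V : Type*} [Fintype V] (G : SimpleGraph V) (A : Finset V) : ℕ :=
  (G.edgeFinset.filter fun e => ∀ v ∈ e, v ∈ A).card

section Helpers

variable {V : Type*} [Fintype V] (G : SimpleGraph V)

/-- local handshake -/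
lemma BP.sum_inter_deg (A : Finset V) :
    ∑ v ∈ A, (G.neighborFinset v ∩ A).card = 2 * edgesIn G A := by
  classical
  let H : SimpleGraph V :=
    { Adj := fun x y => G.Adj x y ∧ x ∈ A ∧ y ∈ A
      symm := by constructor; rintro x y ⟨h1, h2, h3⟩; exact ⟨h1.symm, h3, h2⟩
      loopless := by constructor; rintro x ⟨h1, -⟩; exact G.loopless.irrefl x h1 }
  have hedge : H.edgeFinset = G.edgeFinset.filter (fun e => ∀ v ∈ e, v ∈ A) := by
    ext e
    refine Sym2.ind (fun x y => ?_) e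
    simp [SimpleGraph.mem_edgeFinset, SimpleGraph.mem_edgeSet, H]
  have hnb : ∀ v : V, H.neighborFinset v = if v ∈ A then G.neighborFinset v ∩ A else ∅ := by
    intro v
    split_ifs with hv
    · ext w; simp [SimpleGraph.mem_neighborFinset, H, hv]
    · ext w; simp [SimpleGraph.mem_neighborFinset, H, hv]
  have hs := SimpleGraph.sum_degrees_eq_twice_card_edges H
  have hdeg : ∀ v : V, H.degree v = if v ∈ A then (G.neighborFinset v ∩ A).card else 0 := by
    intro v
    rw [← SimpleGraph.card_neighborFinset_eq_degree, hnb]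
    split_ifs <;> simp
  calc ∑ v ∈ A, (G.neighborFinset v ∩ A).card
      = ∑ v : V, H.degree v := by
        rw [Finset.sum_congr rfl (fun v _ => hdeg v), Finset.sum_ite_mem, Finset.univ_inter]
    _ = 2 * edgesIn G A := by rw [hs, edgesIn, hedge]

lemma BP.cross_symm (A B : Finset V) :
    ∑ v ∈ A, (G.neighborFinset v ∩ B).card = ∑ v ∈ B, (G.neighborFinset v ∩ A).card := by
  classical
  have h : ∀ (t : Finset V) (v : V), (G.neighborFinset v ∩ t).card
      = ∑ w ∈ t, if G.Adj v w then 1 else 0 := by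
    intro t v
    rw [← Finset.card_filter]
    congr 1
    ext w
    simp [SimpleGraph.mem_neighborFinset, and_comm]
  simp only [h]
  rw [Finset.sum_comm]
  apply Finset.sum_congr rfl
  intro w _
  apply Finset.sum_congr rfl
  intro v _
  simp [G.adj_comm]

lemma BP.deg_split (A : Finset V) (v : V) :
    G.degree v = (G.neighborFinset v ∩ A).card + (G.neighborFinset v ∩ Aᶜ).card := by
  classical
  rw [← SimpleGraph.card_neighborFinset_eq_degree]
  have h1 : G.neighborFinset v ∩ A = (G.neighborFinset v).filter (fun w => w ∈ A) := by
    ext w; simp [and_comm]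
  have h2 : G.neighborFinset v ∩ Aᶜ = (G.neighborFinset v).filter (fun w => ¬ w ∈ A) := by
    ext w; simp [and_comm]
  rw [h1, h2, Finset.card_filter_add_card_filter_not]

lemma BP.deg_diff (A : Finset V) :
    ((∑ v ∈ A, G.degree v : ℕ) : ℤ) - (∑ v ∈ Aᶜ, G.degree v : ℕ)
      = 2 * (edgesIn G A : ℤ) - 2 * (edgesIn G Aᶜ : ℤ) := by
  classical
  have h1 : ∑ v ∈ A, G.degree v
      = 2 * edgesIn G A + ∑ v ∈ A, (G.neighborFinset v ∩ Aᶜ).card := by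
    rw [← BP.sum_inter_deg]
    rw [← Finset.sum_add_distrib]
    exact Finset.sum_congr rfl (fun v _ => BP.deg_split G A v)
  have h2 : ∑ v ∈ Aᶜ, G.degree v
      = 2 * edgesIn G Aᶜ + ∑ v ∈ Aᶜ, (G.neighborFinset v ∩ A).card := by
    rw [← BP.sum_inter_deg]
    rw [← Finset.sum_add_distrib]
    refine Finset.sum_congr rfl (fun v _ => ?_)
    have := BP.deg_split G Aᶜ v
    rw [compl_compl] at this
    omega
  have h3 := BP.cross_symm G A Aᶜ
  rw [h1, h2]
  have h3' : ((∑ v ∈ A, (G.neighborFinset v ∩ Aᶜ).card : ℕ) : ℤ)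
      = ((∑ v ∈ Aᶜ, (G.neighborFinset v ∩ A).card : ℕ) : ℤ) := congrArg Nat.cast h3
  push_cast at h3' ⊢
  linarith

end Helpers

section Trans

variable {V : Type*} [Fintype V] (G : SimpleGraph V)
variable {p : ℕ} (fs sn : Fin p → V)

/-- the vertex chosen from pair `x.1` by `x.2` -/
def BP.hmap : Fin p × Bool → V := fun x => if x.2 then fs x.1 else sn x.1

noncomputable def BP.Aset (f : Fin p → Bool) : Finset V :=
  univ.image (fun i => BP.hmap fs sn (i, f i))

open BP

lemma BP.mem_Aset (hbij : Function.Bijective (hmap fs sn)) (f : Fin p → Bool) (i : Fin p)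
    (b : Bool) : hmap fs sn (i, b) ∈ Aset fs sn f ↔ f i = b := by
  constructor
  · intro h
    obtain ⟨j, -, hj⟩ := Finset.mem_image.mp h
    have := hbij.injective hj
    have h1 : j = i := congrArg Prod.fst this
    have h2 : f j = b := congrArg Prod.snd this
    rw [← h1]; exact h2
  · intro h
    exact Finset.mem_image.mpr ⟨i, Finset.mem_univ i, by rw [h]⟩

lemma BP.compl_Aset (hbij : Function.Bijective (hmap fs sn)) (f : Fin p → Bool) :
    (Aset fs sn f)ᶜ = Aset fs sn (fun i => !(f i)) := by
  ext v
  obtain ⟨⟨i, b⟩, rfl⟩ := hbij.surjective v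
  rw [Finset.mem_compl, mem_Aset fs sn hbij, mem_Aset fs sn hbij]
  cases b <;> cases h : f i <;> simp [h]

lemma BP.card_Aset (hbij : Function.Bijective (hmap fs sn)) (f : Fin p → Bool) :
    (Aset fs sn f).card = p := by
  rw [Aset, Finset.card_image_of_injective _ (fun i j hij => ?_), Finset.card_univ,
    Fintype.card_fin]
  exact congrArg Prod.fst (hbij.injective hij)

lemma BP.sum_Aset (hbij : Function.Bijective (hmap fs sn)) (f : Fin p → Bool) (g : V → ℕ) :
    ∑ v ∈ Aset fs sn f, g v = ∑ i : Fin p, g (hmap fs sn (i, f i)) := by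
  rw [Aset, Finset.sum_image]
  intro i _ j _ hij
  exact congrArg Prod.fst (hbij.injective hij)

lemma BP.edgesIn_split (f : Fin p → Bool) :
    edgesIn G (Aset fs sn f) + edgesIn G ((Aset fs sn f)ᶜ)
      = (G.edgeFinset.filter (fun e => (∀ v ∈ e, v ∈ Aset fs sn f)
          ∨ (∀ v ∈ e, v ∈ (Aset fs sn f)ᶜ))).card := by
  rw [edgesIn, edgesIn, Finset.filter_or, Finset.card_union_of_disjoint]
  rw [Finset.disjoint_filter]
  intro e he h1 h2
  induction e with
  | _ x y =>
    have hx := h1 x (Sym2.mem_mk_left x y)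
    have hx2 := h2 x (Sym2.mem_mk_left x y)
    exact (Finset.mem_compl.mp hx2) hx

lemma BP.per_edge (hbij : Function.Bijective (hmap fs sn)) (e : Sym2 V)
    (he : e ∈ G.edgeFinset) :
    2 * (univ.filter (fun f : Fin p → Bool => (∀ v ∈ e, v ∈ Aset fs sn f)
        ∨ (∀ v ∈ e, v ∈ (Aset fs sn f)ᶜ))).card ≤ Fintype.card (Fin p → Bool) := by
  induction e with
  | _ x y =>
  have hadj : G.Adj x y := SimpleGraph.mem_edgeFinset.mp he
  have hxy : x ≠ y := G.ne_of_adj hadj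
  obtain ⟨⟨i, b⟩, hx⟩ := hbij.surjective x
  obtain ⟨⟨j, c⟩, hy⟩ := hbij.surjective y
  have hmem : ∀ f : Fin p → Bool, ((∀ v ∈ s(x, y), v ∈ Aset fs sn f)
        ∨ (∀ v ∈ s(x, y), v ∈ (Aset fs sn f)ᶜ))
      ↔ ((f i = b ∧ f j = c) ∨ (f i = !b ∧ f j = !c)) := by
    intro f
    rw [compl_Aset fs sn hbij]
    subst hx hy
    constructor
    · rintro (h | h)
      · left
        exact ⟨(mem_Aset fs sn hbij f i b).mp (h _ (Sym2.mem_mk_left _ _)),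
               (mem_Aset fs sn hbij f j c).mp (h _ (Sym2.mem_mk_right _ _))⟩
      · right
        have h1 := (mem_Aset fs sn hbij _ i b).mp (h _ (Sym2.mem_mk_left _ _))
        have h2 := (mem_Aset fs sn hbij _ j c).mp (h _ (Sym2.mem_mk_right _ _))
        constructor
        · cases hfi : f i <;> cases b <;> simp_all
        · cases hfj : f j <;> cases c <;> simp_all
    · rintro (⟨h1, h2⟩ | ⟨h1, h2⟩)
      · left
        intro v hv
        rcases Sym2.mem_iff.mp hv with rfl | rfl
        · exact (mem_Aset fs sn hbij f i b).mpr h1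
        · exact (mem_Aset fs sn hbij f j c).mpr h2
      · right
        intro v hv
        rcases Sym2.mem_iff.mp hv with rfl | rfl
        · exact (mem_Aset fs sn hbij _ i b).mpr (by cases b <;> simp_all)
        · exact (mem_Aset fs sn hbij _ j c).mpr (by cases c <;> simp_all)
  by_cases hij : i = j
  · -- same pair: `b ≠ c`, count is 0
    subst hij
    have hbc : b ≠ c := by rintro rfl; exact hxy (hx.symm.trans hy)
    have : (univ.filter (fun f : Fin p → Bool => (∀ v ∈ s(x, y), v ∈ Aset fs sn f)
        ∨ (∀ v ∈ s(x, y), v ∈ (Aset fs sn f)ᶜ))) = ∅ := by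
      rw [Finset.filter_eq_empty_iff]
      intro f _
      rw [hmem f]
      rintro (⟨h1, h2⟩ | ⟨h1, h2⟩)
      · exact hbc (h1.symm.trans h2)
      · exact hbc (by cases b <;> cases c <;> simp_all)
    rw [this]
    simp
  · -- different pairs: flipping the `j`-th pair is an injection into the complement
    set P : (Fin p → Bool) → Prop := fun f => (∀ v ∈ s(x, y), v ∈ Aset fs sn f)
        ∨ (∀ v ∈ s(x, y), v ∈ (Aset fs sn f)ᶜ) with hP
    have hinj : ∀ f ∈ univ.filter P,
        Function.update f j (!(f j)) ∈ univ.filter (fun f => ¬ P f) := by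
      intro f hf
      rw [Finset.mem_filter] at hf ⊢
      refine ⟨Finset.mem_univ _, ?_⟩
      rw [hP] at hf ⊢
      simp only [hmem] at hf ⊢
      have hui : Function.update f j (!(f j)) i = f i := Function.update_of_ne hij _ f
      have huj : Function.update f j (!(f j)) j = !(f j) := Function.update_self _ _ f
      rw [hui, huj]
      rcases hf.2 with ⟨h1, h2⟩ | ⟨h1, h2⟩ <;>
        · rintro (⟨g1, g2⟩ | ⟨g1, g2⟩) <;> cases b <;> cases c <;> simp_all
    have hcard : (univ.filter P).card ≤ (univ.filter (fun f => ¬ P f)).card := by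
      apply Finset.card_le_card_of_injOn _ (fun f hf => hinj f hf)
      intro f hf g hg hfg
      funext k
      have := congrFun hfg k
      simp only at this
      by_cases hk : k = j
      · subst hk
        simp only [Function.update_self] at this
        exact Bool.not_inj this
      · simpa only [Function.update_of_ne hk] using this
    have hsum := Finset.card_filter_add_card_filter_not
      (s := (univ : Finset (Fin p → Bool))) (p := P)
    have hgoal : (univ.filter (fun f : Fin p → Bool => (∀ v ∈ s(x, y), v ∈ Aset fs sn f)
        ∨ (∀ v ∈ s(x, y), v ∈ (Aset fs sn f)ᶜ))) = univ.filter P := rfl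
    rw [hgoal, ← Finset.card_univ]
    omega

lemma BP.exists_good_f (hbij : Function.Bijective (hmap fs sn)) :
    ∃ f : Fin p → Bool,
      2 * (edgesIn G (Aset fs sn f) + edgesIn G ((Aset fs sn f)ᶜ)) ≤ G.edgeFinset.card := by
  by_contra hcon
  push_neg at hcon
  set N := Fintype.card (Fin p → Bool) with hN
  have hswap : ∑ f : Fin p → Bool, (G.edgeFinset.filter (fun e => (∀ v ∈ e, v ∈ Aset fs sn f)
          ∨ (∀ v ∈ e, v ∈ (Aset fs sn f)ᶜ))).card
      = ∑ e ∈ G.edgeFinset, (univ.filter (fun f : Fin p → Bool => (∀ v ∈ e, v ∈ Aset fs sn f)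
          ∨ (∀ v ∈ e, v ∈ (Aset fs sn f)ᶜ))).card := by
    simp only [Finset.card_filter]
    rw [Finset.sum_comm]
  have hub : 2 * ∑ f : Fin p → Bool, (edgesIn G (Aset fs sn f) + edgesIn G ((Aset fs sn f)ᶜ))
      ≤ G.edgeFinset.card * N := by
    simp only [BP.edgesIn_split G fs sn]
    rw [hswap, Finset.mul_sum]
    calc ∑ e ∈ G.edgeFinset, 2 * (univ.filter (fun f : Fin p → Bool => (∀ v ∈ e, v ∈ Aset fs sn f)
          ∨ (∀ v ∈ e, v ∈ (Aset fs sn f)ᶜ))).card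
        ≤ ∑ _e ∈ G.edgeFinset, N :=
          Finset.sum_le_sum (fun e he => BP.per_edge G fs sn hbij e he)
      _ = G.edgeFinset.card * N := by rw [Finset.sum_const, smul_eq_mul]
  have hlb : N * (G.edgeFinset.card + 1)
      ≤ 2 * ∑ f : Fin p → Bool, (edgesIn G (Aset fs sn f) + edgesIn G ((Aset fs sn f)ᶜ)) := by
    calc N * (G.edgeFinset.card + 1) = ∑ _f : Fin p → Bool, (G.edgeFinset.card + 1) := by
          rw [Finset.sum_const, smul_eq_mul, Finset.card_univ, hN]
      _ ≤ ∑ f : Fin p → Bool, 2 * (edgesIn G (Aset fs sn f) + edgesIn G ((Aset fs sn f)ᶜ)) :=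
          Finset.sum_le_sum (fun f _ => hcon f)
      _ = 2 * ∑ f : Fin p → Bool, (edgesIn G (Aset fs sn f) + edgesIn G ((Aset fs sn f)ᶜ)) := by
          rw [Finset.mul_sum]
  have hNpos : 0 < N := Fintype.card_pos
  nlinarith [hub, hlb, hNpos]

end Trans

lemma BP.telescope (c : ℕ → ℤ) (hc : ∀ j k : ℕ, j ≤ k → c k ≤ c j) :
    ∀ p : ℕ, 1 ≤ p → ∑ i ∈ Finset.range p, (c (2*i) - c (2*i+1)) ≤ c 0 - c (2*p - 1) := by
  intro p hp
  induction p, hp using Nat.le_induction with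
  | base => simp
  | succ q hq ih =>
    rw [Finset.sum_range_succ]
    have h1 : c (2*q) ≤ c (2*q - 1) := hc _ _ (by omega)
    have h2 : 2*(q+1) - 1 = 2*q + 1 := by omega
    rw [h2]
    omega

section Pairing

variable {V : Type*} [Fintype V] (G : SimpleGraph V)

lemma BP.exists_pairing {p : ℕ} (hp : 1 ≤ p) (hcard : Fintype.card V = 2 * p) :
    ∃ fs sn : Fin p → V,
      Function.Bijective (fun x : Fin p × Bool => if x.2 then fs x.1 else sn x.1) ∧
      (∀ i, G.degree (sn i) ≤ G.degree (fs i)) ∧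
      (∑ i : Fin p, ((G.degree (fs i) : ℤ) - G.degree (sn i))) ≤ (Fintype.card V : ℤ) - 1 := by
  classical
  set n := Fintype.card V with hn
  set le : V → V → Bool := fun x y => decide (G.degree y ≤ G.degree x) with hle
  set l : List V := (Finset.univ.toList (α := V)).mergeSort le with hl
  have hperm : l.Perm (Finset.univ.toList (α := V)) := List.mergeSort_perm _ _
  have hlen : l.length = n := by
    rw [hperm.length_eq, Finset.length_toList, Finset.card_univ]
  have hnodup : l.Nodup := hperm.nodup_iff.mpr (Finset.nodup_toList _)
  have hsorted : List.Pairwise (fun a b => le a b = true) l :=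
    List.pairwise_mergeSort (by intro a b c h1 h2; simp only [hle, decide_eq_true_eq] at *; omega)
      (by intro a b; simp only [hle, Bool.or_eq_true, decide_eq_true_eq]; omega) _
  set vtx : Fin n → V := fun k => l.get (Fin.cast hlen.symm k) with hvtx
  have hvinj : Function.Injective vtx := by
    intro a b hab
    have := List.nodup_iff_injective_get.mp hnodup hab
    simpa [Fin.ext_iff] using congrArg Fin.val this
  have hmono : ∀ a b : Fin n, a ≤ b → G.degree (vtx b) ≤ G.degree (vtx a) := by
    intro a b hab
    rcases eq_or_lt_of_le hab with rfl | hlt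
    · exact le_rfl
    · have h2 := (List.Pairwise.rel_get_of_lt hsorted (a := Fin.cast hlen.symm a)
        (b := Fin.cast hlen.symm b) (by rw [Fin.lt_def] at hlt ⊢; exact hlt))
      simp only [hle, decide_eq_true_eq] at h2
      exact h2
  refine ⟨fun i => vtx ⟨2*i, by omega⟩, fun i => vtx ⟨2*i+1, by omega⟩, ?_, ?_, ?_⟩
  · rw [Fintype.bijective_iff_injective_and_card]
    constructor
    · rintro ⟨i, b⟩ ⟨j, c⟩ hij
      cases b <;> cases c <;> simp only [ite_true, ite_false] at hij <;>
          (have h := hvinj hij; rw [Fin.mk.injEq] at h) <;>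
        first
          | exact absurd h (by omega)
          | (simp only [Prod.mk.injEq, Fin.ext_iff]; exact ⟨by omega, trivial⟩)
    · simp only [Fintype.card_prod, Fintype.card_fin, Fintype.card_bool]
      omega
  · intro i
    exact hmono _ _ (by simp [Fin.le_def])
  · set c : ℕ → ℤ := fun k => if h : k < n then (G.degree (vtx ⟨k, h⟩) : ℤ) else 0 with hc
    have hcmono : ∀ j k : ℕ, j ≤ k → c k ≤ c j := by
      intro j k hjk
      by_cases hk : k < n
      · have hj : j < n := lt_of_le_of_lt hjk hk
        simp only [hc, dif_pos hk, dif_pos hj, Nat.cast_le]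
        exact hmono ⟨j, hj⟩ ⟨k, hk⟩ (by simpa [Fin.le_def] using hjk)
      · simp only [hc, dif_neg hk]
        by_cases hj : j < n
        · simp only [dif_pos hj]; positivity
        · simp [dif_neg hj]
    have htel := BP.telescope c hcmono p hp
    have hterm : ∀ i : Fin p, ((G.degree (vtx ⟨2*i, by omega⟩) : ℤ)
        - G.degree (vtx ⟨2*i+1, by omega⟩)) = c (2*i) - c (2*i+1) := by
      intro i
      have h1 : 2*(i:ℕ) < n := by omega
      have h2 : 2*(i:ℕ)+1 < n := by omega
      simp only [hc, dif_pos h1, dif_pos h2]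
    calc ∑ i : Fin p, ((G.degree (vtx ⟨2*i, by omega⟩) : ℤ) - G.degree (vtx ⟨2*i+1, by omega⟩))
        = ∑ i ∈ Finset.range p, (c (2*i) - c (2*i+1)) := by
          rw [Finset.sum_range fun i => c (2*i) - c (2*i+1)]
          exact Finset.sum_congr rfl (fun i _ => hterm i)
      _ ≤ c 0 - c (2*p - 1) := htel
      _ ≤ (n : ℤ) - 1 := by
          have h0 : (0:ℕ) < n := by omega
          have hlast : 2*p - 1 < n := by omega
          simp only [hc, dif_pos h0, dif_pos hlast]
          have hd := G.degree_lt_card_verts (vtx ⟨0, h0⟩)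
          have hd2 : (0:ℤ) ≤ G.degree (vtx ⟨2*p-1, hlast⟩) := by positivity
          rw [← hn] at hd
          omega

end Pairing

theorem stmt_15 {V : Type*} [Fintype V] (G : SimpleGraph V)
    (m0 ε : ℝ) (hm0 : 0 < m0) (hε : 0 < ε)
    (heven : Even (Fintype.card V)) (hn : (Fintype.card V : ℝ) > 1 / ε)
    (hm : (G.edgeFinset.card : ℝ) ≤ (4 * m0 - ε) * (Fintype.card V : ℝ) ^ 2) :
    ∃ A : Finset V, 2 * A.card = Fintype.card V ∧
      (max (edgesIn G A) (edgesIn G Aᶜ) : ℝ) < m0 * (Fintype.card V : ℝ) ^ 2 := by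
  classical
  set n := Fintype.card V with hnn
  -- basic facts about n
  have hεinv : (0:ℝ) < 1 / ε := by positivity
  have hnpos : (0:ℝ) < (n:ℝ) := lt_trans hεinv hn
  have hn1 : 1 ≤ n := by exact_mod_cast Nat.one_le_iff_ne_zero.mpr (by
    intro h0
    rw [h0] at hnpos
    simp at hnpos)
  obtain ⟨p, hp⟩ := heven
  have hcard : n = 2 * p := by omega
  have hp1 : 1 ≤ p := by omega
  -- get the degree-sorted pairing
  obtain ⟨fs, sn, hbij, hord, hgap⟩ := BP.exists_pairing G hp1 hcard
  have hbij' : Function.Bijective (BP.hmap fs sn) := hbij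
  -- choose a transversal with few internal edges
  obtain ⟨f, hf⟩ := BP.exists_good_f G fs sn hbij'
  refine ⟨BP.Aset fs sn f, ?_, ?_⟩
  · rw [BP.card_Aset fs sn hbij' f]
    omega
  set A := BP.Aset fs sn f with hA
  set a := edgesIn G A with ha
  set b := edgesIn G Aᶜ with hb
  set m := G.edgeFinset.card with hmm
  -- the difference of internal edge counts is controlled by degree gaps
  have hdiffsum : ((∑ v ∈ A, G.degree v : ℕ) : ℤ) - (∑ v ∈ Aᶜ, G.degree v : ℕ)
      = ∑ i : Fin p, (((G.degree (BP.hmap fs sn (i, f i)) : ℤ))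
          - (G.degree (BP.hmap fs sn (i, !(f i))) : ℤ)) := by
    rw [hA, BP.compl_Aset fs sn hbij' f, BP.sum_Aset fs sn hbij' f (fun v => G.degree v),
      BP.sum_Aset fs sn hbij' _ (fun v => G.degree v)]
    push_cast
    rw [Finset.sum_sub_distrib]
  have habs : |((∑ v ∈ A, G.degree v : ℕ) : ℤ) - (∑ v ∈ Aᶜ, G.degree v : ℕ)| ≤ (n:ℤ) - 1 := by
    rw [hdiffsum]
    calc |∑ i : Fin p, (((G.degree (BP.hmap fs sn (i, f i)) : ℤ))
          - (G.degree (BP.hmap fs sn (i, !(f i))) : ℤ))|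
        ≤ ∑ i : Fin p, |((G.degree (BP.hmap fs sn (i, f i)) : ℤ))
          - (G.degree (BP.hmap fs sn (i, !(f i))) : ℤ)| := Finset.abs_sum_le_sum_abs _ _
      _ ≤ ∑ i : Fin p, ((G.degree (fs i) : ℤ) - G.degree (sn i)) := by
          refine Finset.sum_le_sum (fun i _ => ?_)
          have hi : (G.degree (sn i) : ℤ) ≤ (G.degree (fs i) : ℤ) := by exact_mod_cast hord i
          cases hfi : f i
          case false =>
            show |(G.degree (sn i) : ℤ) - (G.degree (fs i) : ℤ)| ≤ _
            rw [abs_sub_comm, abs_of_nonneg (sub_nonneg.mpr hi)]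
          case true =>
            show |(G.degree (fs i) : ℤ) - (G.degree (sn i) : ℤ)| ≤ _
            rw [abs_of_nonneg (sub_nonneg.mpr hi)]
      _ ≤ (n:ℤ) - 1 := hgap
  have hdd := BP.deg_diff G A
  have habs2 : |2 * (a:ℤ) - 2 * (b:ℤ)| ≤ (n:ℤ) - 1 := by rw [← hdd]; exact habs
  -- combine into the integer bound `4 * max a b ≤ m + n - 1`
  have hkey : 4 * ((max a b : ℕ) : ℤ) ≤ (m:ℤ) + (n:ℤ) - 1 := by
    have hf' : 2 * ((a:ℤ) + b) ≤ (m:ℤ) := by exact_mod_cast hf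
    rw [abs_le] at habs2
    rcases Nat.le_total a b with hab | hab
    · rw [max_eq_right hab]
      have : (a:ℤ) ≤ b := by exact_mod_cast hab
      omega
    · rw [max_eq_left hab]
      have : (b:ℤ) ≤ a := by exact_mod_cast hab
      omega
  -- final real arithmetic
  have hkeyR : 4 * ((max a b : ℕ) : ℝ) ≤ (m:ℝ) + (n:ℝ) - 1 := by exact_mod_cast hkey
  have h1ε : 1 < ε * n := by
    rw [gt_iff_lt, div_lt_iff₀ hε] at hn
    linarith [mul_comm ε (n:ℝ)]
  have hne : (n:ℝ) < ε * (n:ℝ)^2 := by nlinarith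
  have : ((max a b : ℕ) : ℝ) < m0 * (n:ℝ)^2 := by nlinarith
  exact_mod_cast this
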